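/- arXiv:0908.4125 — 4 statements merged into one kernel-verified Lean document; each statement's English description precedes it below -/
import Mathlib

section
/- Let α, α_l, α_r be real numbers with 0 < α_l < α_r < α. Then there exist a real β with 0 < β < α/3 and integers ℓ' ≥ 2 and d' with 0 ≤ d' ≤ ℓ'−2 such that for every real M > 0, the region Y(ℓ', d', M/(α(ℓ'+3))) (built from the parameters α and β) satisfies Y(ℓ', d', M/(α(ℓ'+3))) ⊆ W(α_l, α_r, M) − (M/(ℓ'+3), 0); that is, for every (x,t) ∈ Y(ℓ', d', M/(α(ℓ'+3))) one has (x + M/(ℓ'+3), t) ∈ W(α_l, α_r, M). -/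
open Set

/-- The wedge `W(a_l, a_r, M) = {(x,t) : t ≥ 0, a_l t ≤ x ≤ M + a_r t}` as a subset of `ℝ²`. -/
def wedge (al ar M : ℝ) : Set (ℝ × ℝ) :=
  {p | 0 ≤ p.2 ∧ al * p.2 ≤ p.1 ∧ p.1 ≤ M + ar * p.2}

/-- Translate a subset of `ℝ²` by a vector. -/
def shiftSet (v : ℝ × ℝ) (S : Set (ℝ × ℝ)) : Set (ℝ × ℝ) :=
  (fun p => v + p) '' S

/-- The large left parallelogram `L00`. -/
def bigL (α β M : ℝ) : Set (ℝ × ℝ) :=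
  {p | 0 ≤ p.2 ∧ p.2 ≤ M * (1 + β / α) ∧
    M * β / 2 ≤ p.1 + α * p.2 ∧ p.1 + α * p.2 ≤ 3 * M * β / 2}

/-- The large right parallelogram `R00`. -/
def bigR (α β M : ℝ) : Set (ℝ × ℝ) :=
  {p | 0 ≤ p.2 ∧ p.2 ≤ M * (1 + β / α) ∧
    -(3 * M * β / 2) ≤ p.1 - α * p.2 ∧ p.1 - α * p.2 ≤ -(M * β / 2)}

/-- The small left parallelogram `L00small`. -/
def smallL (α β M : ℝ) : Set (ℝ × ℝ) :=
  {p | 0 ≤ p.2 ∧ p.2 ≤ 3 * M * β / (2 * α) ∧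
    M * β / 2 ≤ p.1 + α * p.2 ∧ p.1 + α * p.2 ≤ 3 * M * β / 2}

/-- The small right parallelogram `R00small`. -/
def smallR (α β M : ℝ) : Set (ℝ × ℝ) :=
  {p | 0 ≤ p.2 ∧ p.2 ≤ 3 * M * β / (2 * α) ∧
    -(3 * M * β / 2) ≤ p.1 - α * p.2 ∧ p.1 - α * p.2 ≤ -(M * β / 2)}

/-- The translation vector `v_jk = (M j (α−β), M k)`. -/
def vjk (α β M : ℝ) (j k : ℤ) : ℝ × ℝ := (M * (j : ℝ) * (α - β), M * (k : ℝ))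

def Ljk (α β M : ℝ) (j k : ℤ) : Set (ℝ × ℝ) := shiftSet (vjk α β M j k) (bigL α β M)
def Rjk (α β M : ℝ) (j k : ℤ) : Set (ℝ × ℝ) := shiftSet (vjk α β M j k) (bigR α β M)
def Lsjk (α β M : ℝ) (j k : ℤ) : Set (ℝ × ℝ) := shiftSet (vjk α β M j k) (smallL α β M)
def Rsjk (α β M : ℝ) (j k : ℤ) : Set (ℝ × ℝ) := shiftSet (vjk α β M j k) (smallR α β M)

/-- The region `Y00` built from `ℓ` big right parallelograms with small left connectors and
two branches of big left parallelograms with small right connectors. -/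
def Y00 (α β M : ℝ) (ℓ d : ℤ) : Set (ℝ × ℝ) :=
  bigR α β M ∪
  (⋃ i ∈ Finset.Icc (1 : ℤ) ℓ, (Rjk α β M i i ∪ Lsjk α β M i i)) ∪
  Ljk α β M ℓ ℓ ∪
  (if 1 ≤ d then Ljk α β M (ℓ + 1) (ℓ + 1) else ∅) ∪
  (if d = 1 then Ljk α β M (ℓ - 1) (ℓ + 1) ∪ Rsjk α β M (ℓ - 1) (ℓ + 1) else ∅) ∪
  (if 2 ≤ d then
    (⋃ i ∈ Finset.Ico (0 : ℤ) d,
      (Ljk α β M (ℓ - i) (ℓ + i) ∪ Rsjk α β M (ℓ - i) (ℓ + i) ∪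
        Ljk α β M (ℓ + 1 - i) (ℓ + 1 + i) ∪ Rsjk α β M (ℓ + 1 - i) (ℓ + 1 + i))) ∪
    Ljk α β M (ℓ - d) (ℓ + d) ∪ Rsjk α β M (ℓ - d) (ℓ + d)
  else ∅)

/-- The shiftSet `Y_jk` of `Y00`. -/
def Yjk (α β M : ℝ) (ℓ d j k : ℤ) : Set (ℝ × ℝ) :=
  shiftSet (M * ((k * (ℓ - d) + j : ℤ) : ℝ) * (α - β), M * (k : ℝ) * ((ℓ + d + 1 : ℤ) : ℝ))
    (Y00 α β M ℓ d)

/-- The full region `Y(ℓ,d,M) = ⋃_{(j,k) ∈ 𝕃, −k ≤ j ≤ k} Y_jk`. -/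
def Yreg (α β M : ℝ) (ℓ d : ℤ) : Set (ℝ × ℝ) :=
  ⋃ (j : ℤ) (k : ℤ) (_ : 0 ≤ k ∧ Even (j + k) ∧ -k ≤ j ∧ j ≤ k), Yjk α β M ℓ d j k

lemma shiftSet_shiftSet (v w : ℝ × ℝ) (S : Set (ℝ × ℝ)) :
    shiftSet v (shiftSet w S) = shiftSet (v + w) S := by
  unfold shiftSet
  rw [Set.image_image]
  apply Set.image_congr'
  intro x
  rw [add_assoc]

lemma smallR_subset (α β M : ℝ) (hα : 0 < α) (hβ : 0 ≤ β) (hβ2 : β ≤ 2 * α) (hM : 0 ≤ M) :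
    smallR α β M ⊆ bigR α β M := by
  intro p hp
  obtain ⟨h0, h1, h2, h3⟩ := hp
  refine ⟨h0, ?_, h2, h3⟩
  have key : 3 * M * β / (2 * α) ≤ M * (1 + β / α) := by
    rw [div_le_iff₀ (by positivity)]
    have : M * (1 + β / α) * (2 * α) = 2 * M * α + 2 * M * β := by
      field_simp
    rw [this]
    nlinarith [mul_nonneg hM hβ, mul_nonneg hM (sub_nonneg.mpr hβ2)]
  linarith

lemma Rsjk_subset (α β M : ℝ) (a b : ℤ) (hα : 0 < α) (hβ : 0 ≤ β) (hβ2 : β ≤ 2 * α)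
    (hM : 0 ≤ M) : Rsjk α β M a b ⊆ Rjk α β M a b :=
  Set.image_mono (smallR_subset α β M hα hβ hβ2 hM)

lemma keyL (α β αl αr M₀ : ℝ) (ℓ d j k a b : ℤ)
    (hα : 0 < α) (hβ : 0 < β) (hβ6 : β ≤ α / 6)
    (hαl : 0 < αl) (hlr : αl < αr) (hαr0 : 0 < αr) (hαr : αr ≤ α - β) (hαrα : αr < α)
    (hM : 0 < M₀) (hl2 : (2:ℤ) ≤ ℓ) (hd0 : (0:ℤ) ≤ d)
    (hSL : αl * ((ℓ:ℝ) + (d:ℝ) + 1) ≤ ((ℓ:ℝ) - (d:ℝ) - 1) * (α - β))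
    (hSR : ((ℓ:ℝ) - (d:ℝ) + 1) * (α - β) ≤ αr * ((ℓ:ℝ) + (d:ℝ) + 1))
    (hk : 0 ≤ k) (hjk : -k ≤ j) (hkj : j ≤ k)
    (hb : (0:ℤ) ≤ b) (ha0 : (0:ℤ) ≤ a) (hC : a ≤ ℓ + 1)
    (hB : αl + 3 * β / 2 ≤ (a:ℝ) * (α - β) - αl * (b:ℝ))
    (p : ℝ × ℝ)
    (hp : p ∈ shiftSet (M₀ * ((k * (ℓ - d) + j : ℤ) : ℝ) * (α - β),
        M₀ * (k : ℝ) * ((ℓ + d + 1 : ℤ) : ℝ)) (Ljk α β M₀ a b)) :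
    0 ≤ p.2 ∧ αl * p.2 ≤ p.1 + α * M₀ ∧
      p.1 + α * M₀ ≤ α * ((ℓ:ℝ) + 3) * M₀ + αr * p.2 := by
  rw [Ljk, shiftSet_shiftSet] at hp
  obtain ⟨r, hr, rfl⟩ := hp
  obtain ⟨h0, h1, h2, h3⟩ := hr
  have hr2α : α * r.2 ≤ M₀ * (α + β) := by
    have he : α * (M₀ * (1 + β / α)) = M₀ * (α + β) := by field_simp
    rw [← he]
    exact mul_le_mul_of_nonneg_left h1 hα.le
  have hk' : (0:ℝ) ≤ (k:ℝ) := by exact_mod_cast hk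
  have hjk' : (0:ℝ) ≤ (j:ℝ) + (k:ℝ) := by
    have : (0:ℤ) ≤ j + k := by omega
    exact_mod_cast this
  have hkj' : (0:ℝ) ≤ (k:ℝ) - (j:ℝ) := by
    have : (0:ℤ) ≤ k - j := by omega
    exact_mod_cast this
  have hb' : (0:ℝ) ≤ (b:ℝ) := by exact_mod_cast hb
  have ha0' : (0:ℝ) ≤ (a:ℝ) := by exact_mod_cast ha0
  have hC' : (a:ℝ) ≤ (ℓ:ℝ) + 1 := by exact_mod_cast hC
  have hl2' : (2:ℝ) ≤ (ℓ:ℝ) := by exact_mod_cast hl2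
  have hd0' : (0:ℝ) ≤ (d:ℝ) := by exact_mod_cast hd0
  simp only [vjk, Prod.mk_add_mk, Prod.fst_add, Prod.snd_add]
  push_cast
  refine ⟨?_, ?_, ?_⟩
  · nlinarith [mul_nonneg (mul_nonneg hM.le hk') (by linarith : (0:ℝ) ≤ (ℓ:ℝ) + (d:ℝ) + 1),
      mul_nonneg hM.le hb']
  · rw [← mul_le_mul_iff_right₀ hα]
    linarith [mul_nonneg (mul_nonneg (mul_nonneg hα.le hM.le) hk')
        (by linarith : (0:ℝ) ≤ ((ℓ:ℝ) - (d:ℝ) - 1) * (α - β) - αl * ((ℓ:ℝ) + (d:ℝ) + 1)),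
      mul_nonneg (mul_nonneg (mul_nonneg hα.le hM.le) hjk') (by linarith : (0:ℝ) ≤ α - β),
      mul_nonneg (mul_nonneg hα.le hM.le)
        (by linarith : (0:ℝ) ≤ (a:ℝ) * (α - β) - αl * (b:ℝ) - (αl + 3 * β / 2)),
      mul_le_mul_of_nonneg_left hr2α hαl.le,
      mul_le_mul_of_nonneg_left hr2α hα.le,
      mul_le_mul_of_nonneg_left h2 hα.le,
      mul_nonneg (mul_nonneg hβ.le hM.le) (by linarith : (0:ℝ) ≤ α - αl)]
  · rw [← mul_le_mul_iff_right₀ hα]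
    linarith [mul_nonneg (mul_nonneg (mul_nonneg hα.le hM.le) hk')
        (by linarith : (0:ℝ) ≤ αr * ((ℓ:ℝ) + (d:ℝ) + 1) - ((ℓ:ℝ) - (d:ℝ) + 1) * (α - β)),
      mul_nonneg (mul_nonneg (mul_nonneg hα.le hM.le) hkj') (by linarith : (0:ℝ) ≤ α - β),
      mul_nonneg (mul_nonneg (mul_nonneg hα.le hM.le) (by linarith : (0:ℝ) ≤ (ℓ:ℝ) + 1 - (a:ℝ)))
        (by linarith : (0:ℝ) ≤ α - β),
      mul_le_mul_of_nonneg_left h3 hα.le,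
      mul_nonneg (mul_nonneg hα.le hα.le) h0,
      mul_nonneg (mul_nonneg hαr0.le hα.le) h0,
      mul_nonneg (mul_nonneg (mul_nonneg hαr0.le hα.le) hM.le) hb',
      mul_nonneg (mul_nonneg (mul_nonneg hα.le hβ.le) hM.le) (by linarith : (0:ℝ) ≤ (ℓ:ℝ) + 1),
      mul_nonneg (mul_nonneg hα.le hM.le) (by linarith : (0:ℝ) ≤ α - 3 * β / 2)]

lemma keyLs (α β αl αr M₀ : ℝ) (ℓ d j k a b : ℤ)
    (hα : 0 < α) (hβ : 0 < β) (hβ6 : β ≤ α / 6)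
    (hαl : 0 < αl) (hlr : αl < αr) (hαr0 : 0 < αr) (hαr : αr ≤ α - β) (hαrα : αr < α)
    (hM : 0 < M₀) (hl2 : (2:ℤ) ≤ ℓ) (hd0 : (0:ℤ) ≤ d)
    (hSL : αl * ((ℓ:ℝ) + (d:ℝ) + 1) ≤ ((ℓ:ℝ) - (d:ℝ) - 1) * (α - β))
    (hSR : ((ℓ:ℝ) - (d:ℝ) + 1) * (α - β) ≤ αr * ((ℓ:ℝ) + (d:ℝ) + 1))
    (hk : 0 ≤ k) (hjk : -k ≤ j) (hkj : j ≤ k)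
    (hb : (0:ℤ) ≤ b) (ha0 : (0:ℤ) ≤ a) (hC : a ≤ ℓ + 1)
    (hB : 5 * β / 2 - α ≤ (a:ℝ) * (α - β) - αl * (b:ℝ))
    (p : ℝ × ℝ)
    (hp : p ∈ shiftSet (M₀ * ((k * (ℓ - d) + j : ℤ) : ℝ) * (α - β),
        M₀ * (k : ℝ) * ((ℓ + d + 1 : ℤ) : ℝ)) (Lsjk α β M₀ a b)) :
    0 ≤ p.2 ∧ αl * p.2 ≤ p.1 + α * M₀ ∧
      p.1 + α * M₀ ≤ α * ((ℓ:ℝ) + 3) * M₀ + αr * p.2 := by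
  rw [Lsjk, shiftSet_shiftSet] at hp
  obtain ⟨r, hr, rfl⟩ := hp
  obtain ⟨h0, h1, h2, h3⟩ := hr
  have hr2α : α * r.2 ≤ 3 * M₀ * β / 2 := by
    have he : α * (3 * M₀ * β / (2 * α)) = 3 * M₀ * β / 2 := by field_simp
    rw [← he]
    exact mul_le_mul_of_nonneg_left h1 hα.le
  have hk' : (0:ℝ) ≤ (k:ℝ) := by exact_mod_cast hk
  have hjk' : (0:ℝ) ≤ (j:ℝ) + (k:ℝ) := by
    have : (0:ℤ) ≤ j + k := by omega
    exact_mod_cast this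
  have hkj' : (0:ℝ) ≤ (k:ℝ) - (j:ℝ) := by
    have : (0:ℤ) ≤ k - j := by omega
    exact_mod_cast this
  have hb' : (0:ℝ) ≤ (b:ℝ) := by exact_mod_cast hb
  have ha0' : (0:ℝ) ≤ (a:ℝ) := by exact_mod_cast ha0
  have hC' : (a:ℝ) ≤ (ℓ:ℝ) + 1 := by exact_mod_cast hC
  have hl2' : (2:ℝ) ≤ (ℓ:ℝ) := by exact_mod_cast hl2
  have hd0' : (0:ℝ) ≤ (d:ℝ) := by exact_mod_cast hd0
  simp only [vjk, Prod.mk_add_mk, Prod.fst_add, Prod.snd_add]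
  push_cast
  refine ⟨?_, ?_, ?_⟩
  · nlinarith [mul_nonneg (mul_nonneg hM.le hk') (by linarith : (0:ℝ) ≤ (ℓ:ℝ) + (d:ℝ) + 1),
      mul_nonneg hM.le hb']
  · rw [← mul_le_mul_iff_right₀ hα]
    linarith [mul_nonneg (mul_nonneg (mul_nonneg hα.le hM.le) hk')
        (by linarith : (0:ℝ) ≤ ((ℓ:ℝ) - (d:ℝ) - 1) * (α - β) - αl * ((ℓ:ℝ) + (d:ℝ) + 1)),
      mul_nonneg (mul_nonneg (mul_nonneg hα.le hM.le) hjk') (by linarith : (0:ℝ) ≤ α - β),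
      mul_nonneg (mul_nonneg hα.le hM.le)
        (by linarith : (0:ℝ) ≤ (a:ℝ) * (α - β) - αl * (b:ℝ) - (5 * β / 2 - α)),
      mul_le_mul_of_nonneg_left hr2α hαl.le,
      mul_le_mul_of_nonneg_left hr2α hα.le,
      mul_le_mul_of_nonneg_left h2 hα.le,
      mul_nonneg (mul_nonneg hβ.le hM.le) (by linarith : (0:ℝ) ≤ α - αl)]
  · rw [← mul_le_mul_iff_right₀ hα]
    linarith [mul_nonneg (mul_nonneg (mul_nonneg hα.le hM.le) hk')
        (by linarith : (0:ℝ) ≤ αr * ((ℓ:ℝ) + (d:ℝ) + 1) - ((ℓ:ℝ) - (d:ℝ) + 1) * (α - β)),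
      mul_nonneg (mul_nonneg (mul_nonneg hα.le hM.le) hkj') (by linarith : (0:ℝ) ≤ α - β),
      mul_nonneg (mul_nonneg (mul_nonneg hα.le hM.le) (by linarith : (0:ℝ) ≤ (ℓ:ℝ) + 1 - (a:ℝ)))
        (by linarith : (0:ℝ) ≤ α - β),
      mul_le_mul_of_nonneg_left h3 hα.le,
      mul_nonneg (mul_nonneg hα.le hα.le) h0,
      mul_nonneg (mul_nonneg hαr0.le hα.le) h0,
      mul_nonneg (mul_nonneg (mul_nonneg hαr0.le hα.le) hM.le) hb',
      mul_nonneg (mul_nonneg (mul_nonneg hα.le hβ.le) hM.le) (by linarith : (0:ℝ) ≤ (ℓ:ℝ) + 1),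
      mul_nonneg (mul_nonneg hα.le hM.le) (by linarith : (0:ℝ) ≤ α - 3 * β / 2)]

lemma keyR (α β αl αr M₀ : ℝ) (ℓ d j k a b : ℤ)
    (hα : 0 < α) (hβ : 0 < β) (hβ6 : β ≤ α / 6)
    (hαl : 0 < αl) (hlr : αl < αr) (hαr0 : 0 < αr) (hαr : αr ≤ α - β) (hαrα : αr < α)
    (hM : 0 < M₀) (hl2 : (2:ℤ) ≤ ℓ) (hd0 : (0:ℤ) ≤ d)
    (hSL : αl * ((ℓ:ℝ) + (d:ℝ) + 1) ≤ ((ℓ:ℝ) - (d:ℝ) - 1) * (α - β))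
    (hSR : ((ℓ:ℝ) - (d:ℝ) + 1) * (α - β) ≤ αr * ((ℓ:ℝ) + (d:ℝ) + 1))
    (hk : 0 ≤ k) (hjk : -k ≤ j) (hkj : j ≤ k)
    (hb : (0:ℤ) ≤ b) (ha0 : (0:ℤ) ≤ a) (hC : a ≤ ℓ + 1)
    (hB : 3 * β / 2 - α ≤ (a:ℝ) * (α - β) - αl * (b:ℝ))
    (p : ℝ × ℝ)
    (hp : p ∈ shiftSet (M₀ * ((k * (ℓ - d) + j : ℤ) : ℝ) * (α - β),
        M₀ * (k : ℝ) * ((ℓ + d + 1 : ℤ) : ℝ)) (Rjk α β M₀ a b)) :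
    0 ≤ p.2 ∧ αl * p.2 ≤ p.1 + α * M₀ ∧
      p.1 + α * M₀ ≤ α * ((ℓ:ℝ) + 3) * M₀ + αr * p.2 := by
  rw [Rjk, shiftSet_shiftSet] at hp
  obtain ⟨r, hr, rfl⟩ := hp
  obtain ⟨h0, h1, h2, h3⟩ := hr
  have hr2α : α * r.2 ≤ M₀ * (α + β) := by
    have he : α * (M₀ * (1 + β / α)) = M₀ * (α + β) := by field_simp
    rw [← he]
    exact mul_le_mul_of_nonneg_left h1 hα.le
  have hk' : (0:ℝ) ≤ (k:ℝ) := by exact_mod_cast hk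
  have hjk' : (0:ℝ) ≤ (j:ℝ) + (k:ℝ) := by
    have : (0:ℤ) ≤ j + k := by omega
    exact_mod_cast this
  have hkj' : (0:ℝ) ≤ (k:ℝ) - (j:ℝ) := by
    have : (0:ℤ) ≤ k - j := by omega
    exact_mod_cast this
  have hb' : (0:ℝ) ≤ (b:ℝ) := by exact_mod_cast hb
  have ha0' : (0:ℝ) ≤ (a:ℝ) := by exact_mod_cast ha0
  have hC' : (a:ℝ) ≤ (ℓ:ℝ) + 1 := by exact_mod_cast hC
  have hl2' : (2:ℝ) ≤ (ℓ:ℝ) := by exact_mod_cast hl2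
  have hd0' : (0:ℝ) ≤ (d:ℝ) := by exact_mod_cast hd0
  simp only [vjk, Prod.mk_add_mk, Prod.fst_add, Prod.snd_add]
  push_cast
  refine ⟨?_, ?_, ?_⟩
  · nlinarith [mul_nonneg (mul_nonneg hM.le hk') (by linarith : (0:ℝ) ≤ (ℓ:ℝ) + (d:ℝ) + 1),
      mul_nonneg hM.le hb']
  · rw [← mul_le_mul_iff_right₀ hα]
    linarith [mul_nonneg (mul_nonneg (mul_nonneg hα.le hM.le) hk')
        (by linarith : (0:ℝ) ≤ ((ℓ:ℝ) - (d:ℝ) - 1) * (α - β) - αl * ((ℓ:ℝ) + (d:ℝ) + 1)),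
      mul_nonneg (mul_nonneg (mul_nonneg hα.le hM.le) hjk') (by linarith : (0:ℝ) ≤ α - β),
      mul_nonneg (mul_nonneg hα.le hM.le)
        (by linarith : (0:ℝ) ≤ (a:ℝ) * (α - β) - αl * (b:ℝ) - (3 * β / 2 - α)),
      mul_le_mul_of_nonneg_left h2 hα.le,
      mul_nonneg (by linarith : (0:ℝ) ≤ α - αl) (mul_nonneg hα.le h0)]
  · rw [← mul_le_mul_iff_right₀ hα]
    linarith [mul_nonneg (mul_nonneg (mul_nonneg hα.le hM.le) hk')
        (by linarith : (0:ℝ) ≤ αr * ((ℓ:ℝ) + (d:ℝ) + 1) - ((ℓ:ℝ) - (d:ℝ) + 1) * (α - β)),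
      mul_nonneg (mul_nonneg (mul_nonneg hα.le hM.le) hkj') (by linarith : (0:ℝ) ≤ α - β),
      mul_nonneg (mul_nonneg (mul_nonneg hα.le hM.le) (by linarith : (0:ℝ) ≤ (ℓ:ℝ) + 1 - (a:ℝ)))
        (by linarith : (0:ℝ) ≤ α - β),
      mul_le_mul_of_nonneg_left h3 hα.le,
      mul_le_mul_of_nonneg_left hr2α (by linarith : (0:ℝ) ≤ α - αr),
      mul_nonneg (mul_nonneg (mul_nonneg hαr0.le hα.le) hM.le) hb',
      mul_nonneg (mul_nonneg hαr0.le hM.le) (by linarith : (0:ℝ) ≤ α + β),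
      mul_nonneg (mul_nonneg hα.le hβ.le) hM.le,
      mul_nonneg (mul_nonneg (mul_nonneg hα.le hβ.le) hM.le) (by linarith : (0:ℝ) ≤ (ℓ:ℝ)),
      mul_nonneg (mul_nonneg hα.le hM.le) (by linarith : (0:ℝ) ≤ α - 3 * β / 2)]

lemma hB_L1 (α β αl L D A : ℝ) (hβ : 0 < β) (hβ6 : β ≤ α / 6) (hαl : 0 < αl)
    (hSL : αl * (L + D + 1) ≤ (L - D - 1) * (α - β))
    (hA : L - D ≤ A) :
    αl + 3 * β / 2 ≤ A * (α - β) - αl * (2 * L - A) := by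
  have hγ : 0 < α - β + αl := by linarith
  nlinarith [mul_le_mul_of_nonneg_right hA hγ.le]

lemma hB_L2 (α β αl L D A : ℝ) (hβ : 0 < β) (hβ6 : β ≤ α / 6) (hαl : 0 < αl)
    (hSL : αl * (L + D + 1) ≤ (L - D - 1) * (α - β))
    (hA : L - D + 2 ≤ A) :
    αl + 3 * β / 2 ≤ A * (α - β) - αl * (2 * L + 2 - A) := by
  have hγ : 0 < α - β + αl := by linarith
  nlinarith [mul_le_mul_of_nonneg_right hA hγ.le]

set_option maxHeartbeats 4000000 in
/-- The containment Claim: for `0 < α_l < α_r < α` there are `β ∈ (0, α/3)` and integers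
`ℓ' ≥ 2`, `0 ≤ d' ≤ ℓ' − 2` such that for every `M > 0`,
`Y(ℓ', d', M/(α(ℓ'+3))) ⊆ W(α_l, α_r, M) − (M/(ℓ'+3), 0)`. -/
theorem containment_claim (α αl αr : ℝ) (h1 : 0 < αl) (h2 : αl < αr) (h3 : αr < α) :
    ∃ (β : ℝ) (ℓ' d' : ℤ), 0 < β ∧ β < α / 3 ∧ 2 ≤ ℓ' ∧ 0 ≤ d' ∧ d' ≤ ℓ' - 2 ∧
      ∀ M : ℝ, 0 < M →
        ∀ p ∈ Yreg α β (M / (α * ((ℓ' : ℝ) + 3))) ℓ' d',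
          (p.1 + M / ((ℓ' : ℝ) + 3), p.2) ∈ wedge αl αr M := by
  have hα : 0 < α := h1.trans (h2.trans h3)
  have hαr0 : 0 < αr := h1.trans h2
  obtain ⟨β, hβdef⟩ : ∃ x : ℝ, x = min (α / 6) ((α - αr) / 2) := ⟨_, rfl⟩
  have hβ : 0 < β := hβdef ▸ lt_min (by linarith) (by linarith)
  have hβ6 : β ≤ α / 6 := hβdef ▸ min_le_left _ _
  have hβ2 : β ≤ (α - αr) / 2 := hβdef ▸ min_le_right _ _
  have hγr : αr ≤ α - β := by linarith
  have hγpos : 0 < α - β := by linarith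
  have hγl : αl < α - β := by linarith
  have hden : 0 < (α - β) * (αr - αl) := mul_pos hγpos (by linarith)
  obtain ⟨m, hmdef⟩ : ∃ m : ℤ,
      m = max ⌈((α - β) * (αr + αl) + 2 * αl * αr) / ((α - β) * (αr - αl))⌉ 2 := ⟨_, rfl⟩
  have hm2 : (2:ℤ) ≤ m := hmdef ▸ le_max_right _ _
  have hm2' : (2:ℝ) ≤ (m:ℝ) := by exact_mod_cast hm2
  have hm₀le : ((α - β) * (αr + αl) + 2 * αl * αr) / ((α - β) * (αr - αl)) ≤ (m:ℝ) := by
    refine le_trans (Int.le_ceil _) ?_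
    rw [hmdef]
    exact_mod_cast le_max_left ⌈((α - β) * (αr + αl) + 2 * αl * αr) / ((α - β) * (αr - αl))⌉ 2
  have hm₀m : (α - β) * (αr + αl) + 2 * αl * αr ≤ (m:ℝ) * ((α - β) * (αr - αl)) := by
    rw [div_le_iff₀ hden] at hm₀le
    linarith
  obtain ⟨d, hddef⟩ : ∃ d : ℤ, d = ⌈((m:ℝ) + 1) * ((α - β) - αr) / (2 * αr)⌉ := ⟨_, rfl⟩
  have h2αr : (0:ℝ) < 2 * αr := by linarith
  have hx0 : (0:ℝ) ≤ ((m:ℝ) + 1) * ((α - β) - αr) / (2 * αr) :=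
    div_nonneg (mul_nonneg (by linarith) (by linarith)) h2αr.le
  have hd0 : (0:ℤ) ≤ d := hddef ▸ Int.ceil_nonneg hx0
  have hd0' : (0:ℝ) ≤ (d:ℝ) := by exact_mod_cast hd0
  have hdx : ((m:ℝ) + 1) * ((α - β) - αr) / (2 * αr) ≤ (d:ℝ) := by
    rw [hddef]; exact Int.le_ceil _
  have hdx1 : (d:ℝ) ≤ ((m:ℝ) + 1) * ((α - β) - αr) / (2 * αr) + 1 := by
    rw [hddef]; exact le_of_lt (Int.ceil_lt_add_one _)
  have hdxm : ((m:ℝ) + 1) * ((α - β) - αr) ≤ 2 * αr * (d:ℝ) := by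
    rw [div_le_iff₀ h2αr] at hdx
    linarith
  have hdxm1 : 2 * αr * (d:ℝ) ≤ ((m:ℝ) + 1) * ((α - β) - αr) + 2 * αr := by
    have h' : (d:ℝ) - 1 ≤ ((m:ℝ) + 1) * ((α - β) - αr) / (2 * αr) := by linarith
    rw [sub_le_iff_le_add, ← sub_le_iff_le_add'] at h'
    rw [div_le_iff₀ h2αr] at hdx
    have h'' : ((d:ℝ) - 1) * (2 * αr) ≤ ((m:ℝ) + 1) * ((α - β) - αr) := by
      rw [← le_div_iff₀ h2αr]; linarith
    linarith
  obtain ⟨ℓ, hℓdef⟩ : ∃ l : ℤ, l = m + d := ⟨_, rfl⟩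
  have hℓ2 : (2:ℤ) ≤ ℓ := by omega
  have hℓ2' : (2:ℝ) ≤ (ℓ:ℝ) := by exact_mod_cast hℓ2
  have hℓmd : (ℓ:ℝ) = (m:ℝ) + (d:ℝ) := by exact_mod_cast congrArg (Int.cast : ℤ → ℝ) hℓdef
  have hSR : ((ℓ:ℝ) - (d:ℝ) + 1) * (α - β) ≤ αr * ((ℓ:ℝ) + (d:ℝ) + 1) := by
    rw [hℓmd]; linarith
  have hSL : αl * ((ℓ:ℝ) + (d:ℝ) + 1) ≤ ((ℓ:ℝ) - (d:ℝ) - 1) * (α - β) := by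
    rw [hℓmd]
    rw [← mul_le_mul_iff_right₀ hαr0]
    nlinarith [mul_le_mul_of_nonneg_left hdxm1 h1.le, hm₀m]
  refine ⟨β, ℓ, d, hβ, lt_of_le_of_lt hβ6 (by linarith), hℓ2, hd0, by omega, ?_⟩
  intro M hM p hp
  have hl3 : (0:ℝ) < α * ((ℓ:ℝ) + 3) := mul_pos hα (by linarith)
  obtain ⟨M₀, hM₀def⟩ : ∃ x : ℝ, x = M / (α * ((ℓ:ℝ) + 3)) := ⟨_, rfl⟩
  rw [← hM₀def] at hp
  have hM₀ : 0 < M₀ := hM₀def ▸ div_pos hM hl3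
  have hlne : ((ℓ:ℝ) + 3) ≠ 0 := by linarith
  have hM2 : M = α * ((ℓ:ℝ) + 3) * M₀ := by
    rw [hM₀def]; field_simp
  have hM1 : M / ((ℓ:ℝ) + 3) = α * M₀ := by
    rw [hM2]; field_simp
  simp only [Yreg, Set.mem_iUnion] at hp
  obtain ⟨j, k, ⟨hk0, -, hjk, hkj⟩, hp⟩ := hp
  simp only [Yjk] at hp
  obtain ⟨q, hq, rfl⟩ := hp
  show 0 ≤ ((M₀ * ((k * (ℓ - d) + j : ℤ) : ℝ) * (α - β), M₀ * (k : ℝ) * ((ℓ + d + 1 : ℤ) : ℝ)) + q).2 ∧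
      αl * ((M₀ * ((k * (ℓ - d) + j : ℤ) : ℝ) * (α - β), M₀ * (k : ℝ) * ((ℓ + d + 1 : ℤ) : ℝ)) + q).2 ≤
        ((M₀ * ((k * (ℓ - d) + j : ℤ) : ℝ) * (α - β), M₀ * (k : ℝ) * ((ℓ + d + 1 : ℤ) : ℝ)) + q).1 + M / ((ℓ:ℝ) + 3) ∧
      ((M₀ * ((k * (ℓ - d) + j : ℤ) : ℝ) * (α - β), M₀ * (k : ℝ) * ((ℓ + d + 1 : ℤ) : ℝ)) + q).1 + M / ((ℓ:ℝ) + 3) ≤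
        M + αr * ((M₀ * ((k * (ℓ - d) + j : ℤ) : ℝ) * (α - β), M₀ * (k : ℝ) * ((ℓ + d + 1 : ℤ) : ℝ)) + q).2
  rw [hM1, hM2]
  have KL : ∀ a b : ℤ, (0:ℤ) ≤ b → (0:ℤ) ≤ a → a ≤ ℓ + 1 →
      αl + 3 * β / 2 ≤ (a:ℝ) * (α - β) - αl * (b:ℝ) → q ∈ Ljk α β M₀ a b →
      0 ≤ ((M₀ * ((k * (ℓ - d) + j : ℤ) : ℝ) * (α - β), M₀ * (k : ℝ) * ((ℓ + d + 1 : ℤ) : ℝ)) + q).2 ∧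
      αl * ((M₀ * ((k * (ℓ - d) + j : ℤ) : ℝ) * (α - β), M₀ * (k : ℝ) * ((ℓ + d + 1 : ℤ) : ℝ)) + q).2 ≤
        ((M₀ * ((k * (ℓ - d) + j : ℤ) : ℝ) * (α - β), M₀ * (k : ℝ) * ((ℓ + d + 1 : ℤ) : ℝ)) + q).1 + α * M₀ ∧
      ((M₀ * ((k * (ℓ - d) + j : ℤ) : ℝ) * (α - β), M₀ * (k : ℝ) * ((ℓ + d + 1 : ℤ) : ℝ)) + q).1 + α * M₀ ≤
        α * ((ℓ:ℝ) + 3) * M₀ + αr * ((M₀ * ((k * (ℓ - d) + j : ℤ) : ℝ) * (α - β), M₀ * (k : ℝ) * ((ℓ + d + 1 : ℤ) : ℝ)) + q).2 :=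
    fun a b hb ha0 hC hB hq =>
      keyL α β αl αr M₀ ℓ d j k a b hα hβ hβ6 h1 h2 hαr0 hγr h3 hM₀ hℓ2 hd0 hSL hSR
        hk0 hjk hkj hb ha0 hC hB _ ⟨q, hq, rfl⟩
  have KLs : ∀ a b : ℤ, (0:ℤ) ≤ b → (0:ℤ) ≤ a → a ≤ ℓ + 1 →
      5 * β / 2 - α ≤ (a:ℝ) * (α - β) - αl * (b:ℝ) → q ∈ Lsjk α β M₀ a b →
      0 ≤ ((M₀ * ((k * (ℓ - d) + j : ℤ) : ℝ) * (α - β), M₀ * (k : ℝ) * ((ℓ + d + 1 : ℤ) : ℝ)) + q).2 ∧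
      αl * ((M₀ * ((k * (ℓ - d) + j : ℤ) : ℝ) * (α - β), M₀ * (k : ℝ) * ((ℓ + d + 1 : ℤ) : ℝ)) + q).2 ≤
        ((M₀ * ((k * (ℓ - d) + j : ℤ) : ℝ) * (α - β), M₀ * (k : ℝ) * ((ℓ + d + 1 : ℤ) : ℝ)) + q).1 + α * M₀ ∧
      ((M₀ * ((k * (ℓ - d) + j : ℤ) : ℝ) * (α - β), M₀ * (k : ℝ) * ((ℓ + d + 1 : ℤ) : ℝ)) + q).1 + α * M₀ ≤
        α * ((ℓ:ℝ) + 3) * M₀ + αr * ((M₀ * ((k * (ℓ - d) + j : ℤ) : ℝ) * (α - β), M₀ * (k : ℝ) * ((ℓ + d + 1 : ℤ) : ℝ)) + q).2 :=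
    fun a b hb ha0 hC hB hq =>
      keyLs α β αl αr M₀ ℓ d j k a b hα hβ hβ6 h1 h2 hαr0 hγr h3 hM₀ hℓ2 hd0 hSL hSR
        hk0 hjk hkj hb ha0 hC hB _ ⟨q, hq, rfl⟩
  have KR : ∀ a b : ℤ, (0:ℤ) ≤ b → (0:ℤ) ≤ a → a ≤ ℓ + 1 →
      3 * β / 2 - α ≤ (a:ℝ) * (α - β) - αl * (b:ℝ) → q ∈ Rjk α β M₀ a b →
      0 ≤ ((M₀ * ((k * (ℓ - d) + j : ℤ) : ℝ) * (α - β), M₀ * (k : ℝ) * ((ℓ + d + 1 : ℤ) : ℝ)) + q).2 ∧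
      αl * ((M₀ * ((k * (ℓ - d) + j : ℤ) : ℝ) * (α - β), M₀ * (k : ℝ) * ((ℓ + d + 1 : ℤ) : ℝ)) + q).2 ≤
        ((M₀ * ((k * (ℓ - d) + j : ℤ) : ℝ) * (α - β), M₀ * (k : ℝ) * ((ℓ + d + 1 : ℤ) : ℝ)) + q).1 + α * M₀ ∧
      ((M₀ * ((k * (ℓ - d) + j : ℤ) : ℝ) * (α - β), M₀ * (k : ℝ) * ((ℓ + d + 1 : ℤ) : ℝ)) + q).1 + α * M₀ ≤
        α * ((ℓ:ℝ) + 3) * M₀ + αr * ((M₀ * ((k * (ℓ - d) + j : ℤ) : ℝ) * (α - β), M₀ * (k : ℝ) * ((ℓ + d + 1 : ℤ) : ℝ)) + q).2 :=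
    fun a b hb ha0 hC hB hq =>
      keyR α β αl αr M₀ ℓ d j k a b hα hβ hβ6 h1 h2 hαr0 hγr h3 hM₀ hℓ2 hd0 hSL hSR
        hk0 hjk hkj hb ha0 hC hB _ ⟨q, hq, rfl⟩
  have KRs : ∀ a b : ℤ, (0:ℤ) ≤ b → (0:ℤ) ≤ a → a ≤ ℓ + 1 →
      3 * β / 2 - α ≤ (a:ℝ) * (α - β) - αl * (b:ℝ) → q ∈ Rsjk α β M₀ a b →
      0 ≤ ((M₀ * ((k * (ℓ - d) + j : ℤ) : ℝ) * (α - β), M₀ * (k : ℝ) * ((ℓ + d + 1 : ℤ) : ℝ)) + q).2 ∧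
      αl * ((M₀ * ((k * (ℓ - d) + j : ℤ) : ℝ) * (α - β), M₀ * (k : ℝ) * ((ℓ + d + 1 : ℤ) : ℝ)) + q).2 ≤
        ((M₀ * ((k * (ℓ - d) + j : ℤ) : ℝ) * (α - β), M₀ * (k : ℝ) * ((ℓ + d + 1 : ℤ) : ℝ)) + q).1 + α * M₀ ∧
      ((M₀ * ((k * (ℓ - d) + j : ℤ) : ℝ) * (α - β), M₀ * (k : ℝ) * ((ℓ + d + 1 : ℤ) : ℝ)) + q).1 + α * M₀ ≤
        α * ((ℓ:ℝ) + 3) * M₀ + αr * ((M₀ * ((k * (ℓ - d) + j : ℤ) : ℝ) * (α - β), M₀ * (k : ℝ) * ((ℓ + d + 1 : ℤ) : ℝ)) + q).2 :=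
    fun a b hb ha0 hC hB hq =>
      KR a b hb ha0 hC hB (Rsjk_subset α β M₀ a b hα hβ.le (by linarith) hM₀.le hq)
  simp only [Y00, Set.mem_union] at hq
  rcases hq with ((((hq | hq) | hq) | hq) | hq) | hq
  · -- bigR at (0,0)
    refine KR 0 0 le_rfl le_rfl (by omega) (by norm_num; linarith) ⟨q, hq, ?_⟩
    simp [vjk]
  · -- R i i and Ls i i, 1 ≤ i ≤ ℓ
    simp only [Set.mem_iUnion, Finset.mem_Icc, Set.mem_union] at hq
    obtain ⟨i, ⟨hi1, hi2⟩, hq | hq⟩ := hq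
    · refine KR i i (by omega) (by omega) (by omega) ?_ hq
      have hi0 : (0:ℝ) ≤ (i:ℝ) := by exact_mod_cast (by omega : (0:ℤ) ≤ i)
      nlinarith [mul_nonneg hi0 (by linarith : (0:ℝ) ≤ (α - β) - αl)]
    · refine KLs i i (by omega) (by omega) (by omega) ?_ hq
      have hi0 : (0:ℝ) ≤ (i:ℝ) := by exact_mod_cast (by omega : (0:ℤ) ≤ i)
      nlinarith [mul_nonneg hi0 (by linarith : (0:ℝ) ≤ (α - β) - αl)]
  · -- L ℓ ℓ
    refine KL ℓ ℓ (by omega) (by omega) (by omega) ?_ hq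
    have := hB_L1 α β αl (ℓ:ℝ) (d:ℝ) ((ℓ:ℝ) - 0) hβ hβ6 h1 hSL (by linarith)
    push_cast
    linarith
  · -- if 1 ≤ d : L (ℓ+1) (ℓ+1)
    by_cases hd1 : 1 ≤ d
    · rw [if_pos hd1] at hq
      have hd1' : (1:ℝ) ≤ (d:ℝ) := by exact_mod_cast hd1
      refine KL (ℓ+1) (ℓ+1) (by omega) (by omega) (by omega) ?_ hq
      have := hB_L2 α β αl (ℓ:ℝ) (d:ℝ) ((ℓ:ℝ) + 1) hβ hβ6 h1 hSL (by linarith)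
      push_cast
      linarith
    · rw [if_neg hd1] at hq
      exact absurd hq (Set.notMem_empty q)
  · -- if d = 1 : L (ℓ-1) (ℓ+1) ∪ Rs (ℓ-1) (ℓ+1)
    by_cases hd1 : d = 1
    · rw [if_pos hd1] at hq
      have hd1' : (d:ℝ) = 1 := by exact_mod_cast hd1
      have hBv := hB_L1 α β αl (ℓ:ℝ) (d:ℝ) ((ℓ:ℝ) - 1) hβ hβ6 h1 hSL (by rw [hd1'])
      rcases hq with hq | hq
      · refine KL (ℓ-1) (ℓ+1) (by omega) (by omega) (by omega) ?_ hq
        push_cast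
        linarith
      · refine KRs (ℓ-1) (ℓ+1) (by omega) (by omega) (by omega) ?_ hq
        push_cast
        linarith
    · rw [if_neg hd1] at hq
      exact absurd hq (Set.notMem_empty q)
  · -- if 2 ≤ d
    by_cases hd2 : 2 ≤ d
    · rw [if_pos hd2] at hq
      rcases hq with (hq | hq) | hq
      · -- the union over i ∈ Ico 0 d
        simp only [Set.mem_iUnion, Finset.mem_Ico, Set.mem_union] at hq
        obtain ⟨i, ⟨hi0, hid⟩, ((hq | hq) | hq) | hq⟩ := hq
        · refine KL (ℓ-i) (ℓ+i) (by omega) (by omega) (by omega) ?_ hq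
          have hi' : (i:ℝ) ≤ (d:ℝ) := by exact_mod_cast (by omega : i ≤ d)
          have := hB_L1 α β αl (ℓ:ℝ) (d:ℝ) ((ℓ:ℝ) - (i:ℝ)) hβ hβ6 h1 hSL (by linarith)
          push_cast
          linarith
        · refine KRs (ℓ-i) (ℓ+i) (by omega) (by omega) (by omega) ?_ hq
          have hi' : (i:ℝ) ≤ (d:ℝ) := by exact_mod_cast (by omega : i ≤ d)
          have := hB_L1 α β αl (ℓ:ℝ) (d:ℝ) ((ℓ:ℝ) - (i:ℝ)) hβ hβ6 h1 hSL (by linarith)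
          push_cast
          linarith
        · refine KL (ℓ+1-i) (ℓ+1+i) (by omega) (by omega) (by omega) ?_ hq
          have hi' : (i:ℝ) ≤ (d:ℝ) - 1 := by exact_mod_cast (by omega : i ≤ d - 1)
          have := hB_L2 α β αl (ℓ:ℝ) (d:ℝ) ((ℓ:ℝ) + 1 - (i:ℝ)) hβ hβ6 h1 hSL (by linarith)
          push_cast
          linarith
        · refine KRs (ℓ+1-i) (ℓ+1+i) (by omega) (by omega) (by omega) ?_ hq
          have hi' : (i:ℝ) ≤ (d:ℝ) - 1 := by exact_mod_cast (by omega : i ≤ d - 1)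
          have := hB_L2 α β αl (ℓ:ℝ) (d:ℝ) ((ℓ:ℝ) + 1 - (i:ℝ)) hβ hβ6 h1 hSL (by linarith)
          push_cast
          linarith
      · refine KL (ℓ-d) (ℓ+d) (by omega) (by omega) (by omega) ?_ hq
        have := hB_L1 α β αl (ℓ:ℝ) (d:ℝ) ((ℓ:ℝ) - (d:ℝ)) hβ hβ6 h1 hSL (by linarith)
        push_cast
        linarith
      · refine KRs (ℓ-d) (ℓ+d) (by omega) (by omega) (by omega) ?_ hq
        have := hB_L1 α β αl (ℓ:ℝ) (d:ℝ) ((ℓ:ℝ) - (d:ℝ)) hβ hβ6 h1 hSL (by linarith)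
        push_cast
        linarith
    · rw [if_neg hd2] at hq
      exact absurd hq (Set.notMem_empty q)
end

section
/- Let α > 0, 0 < β < α/3, M > 0 be reals and let ℓ ≥ 2 and d with 0 ≤ d ≤ ℓ−2 be integers. With s_l, s_r as defined (so that 0 < 1/s_l < 1/s_r), one has Y(ℓ,d,M) ⊆ W(1/s_l, 1/s_r, Mα(ℓ+3)) − (Mα, 0); that is, every (x,t) ∈ Y(ℓ,d,M) satisfies (x + Mα, t) ∈ W(1/s_l, 1/s_r, Mα(ℓ+3)). -/
open Set

private lemma shift_mem' {v q : ℝ × ℝ} {S : Set (ℝ × ℝ)} (h : q ∈ shiftSet v S) :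
    ∃ r ∈ S, q = v + r := by
  obtain ⟨r, hr, h⟩ := h
  exact ⟨r, hr, h.symm⟩

private lemma tbig {α β M t : ℝ} (hα : 0 < α) (ht : t ≤ M * (1 + β / α)) :
    α * t ≤ M * α + M * β := by
  have h : M * (1 + β / α) = (M * α + M * β) / α := by field_simp
  rw [h, le_div_iff₀ hα] at ht
  linarith

private lemma tsmall {α β M t : ℝ} (hα : 0 < α) (ht : t ≤ 3 * M * β / (2 * α)) :
    2 * α * t ≤ 3 * M * β := by
  have := (le_div_iff₀ (by linarith : (0:ℝ) < 2 * α)).mp ht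
  linarith

/-- The four inequalities used for a big left parallelogram at `(j,k)`. -/
private lemma caseLbig {α β M cl cr L D j k x0 t0 : ℝ}
    (hβ0 : 0 < β) (hβ : 3 * β < α) (hM : 0 < M)
    (hL : 2 ≤ L) (hD0 : 0 ≤ D)
    (hcl0 : 0 ≤ cl) (hclA : cl ≤ α - β)
    (hclK : cl * (L + D + 1) = (L - D - 1) * (α - β))
    (hcr0 : 0 ≤ cr)
    (hk0 : 0 ≤ k) (hkLD : k ≤ L + D) (hjLD : L - D ≤ j) (hjL : j ≤ L + 1) (hj0 : 0 ≤ j)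
    (ht0 : 0 ≤ t0) (ht1 : α * t0 ≤ M * α + M * β)
    (hx1 : M * β / 2 ≤ x0 + α * t0) (hx2 : x0 + α * t0 ≤ 3 * M * β / 2) :
    0 ≤ M * k + t0 ∧ cl * (M * k + t0) ≤ M * j * (α - β) + x0 + M * α ∧
      M * j * (α - β) + x0 ≤ M * α * (L + 2) + cr * (M * k + t0) := by
  have hα : 0 < α := by linarith
  have hA : 0 < α - β := by linarith
  have h0 : 0 ≤ M * k := mul_nonneg hM.le hk0
  have hclk : cl * k ≤ (j - 1) * (α - β) - cl := by
    nlinarith [mul_nonneg hcl0 (by linarith : (0:ℝ) ≤ L + D - k),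
      mul_nonneg (by linarith : (0:ℝ) ≤ j - 1 - (L - D - 1)) hA.le]
  have hclt : cl * t0 ≤ M * cl + M * β := by
    nlinarith [mul_le_mul_of_nonneg_left ht1 hcl0,
      mul_nonneg hM.le (mul_nonneg hβ0.le (by linarith : (0:ℝ) ≤ α - cl))]
  refine ⟨by linarith, ?_, ?_⟩
  · nlinarith [mul_le_mul_of_nonneg_left hclk hM.le,
      mul_nonneg hM.le (by linarith : (0:ℝ) ≤ α - 5 * β / 2)]
  · nlinarith [mul_nonneg hα.le ht0,
      mul_nonneg hcr0 (by linarith : (0:ℝ) ≤ M * k + t0),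
      mul_le_mul_of_nonneg_left
        (mul_le_mul_of_nonneg_right (by linarith : j ≤ L + 1) hA.le) hM.le,
      mul_nonneg (mul_nonneg hM.le (by linarith : (0:ℝ) ≤ L + 1)) hβ0.le,
      mul_nonneg hM.le (by linarith : (0:ℝ) ≤ α - 3 * β / 2)]

/-- The four inequalities used for a small left parallelogram at `(j,k)`. -/
private lemma caseLsmall {α β M cl cr L j k x0 t0 : ℝ}
    (hβ0 : 0 < β) (hβ : 3 * β < α) (hM : 0 < M)
    (hL : 2 ≤ L)
    (hcl0 : 0 ≤ cl) (hclA : cl ≤ α - β)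
    (hcr0 : 0 ≤ cr)
    (hk0 : 0 ≤ k) (hjk : cl * k ≤ j * (α - β)) (hjL : j ≤ L + 1) (hj0 : 0 ≤ j)
    (ht0 : 0 ≤ t0) (ht1 : 2 * α * t0 ≤ 3 * M * β)
    (hx1 : M * β / 2 ≤ x0 + α * t0) (hx2 : x0 + α * t0 ≤ 3 * M * β / 2) :
    0 ≤ M * k + t0 ∧ cl * (M * k + t0) ≤ M * j * (α - β) + x0 + M * α ∧
      M * j * (α - β) + x0 ≤ M * α * (L + 2) + cr * (M * k + t0) := by
  have hα : 0 < α := by linarith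
  have hA : 0 < α - β := by linarith
  have h0 : 0 ≤ M * k := mul_nonneg hM.le hk0
  refine ⟨by linarith, ?_, ?_⟩
  · nlinarith [mul_le_mul_of_nonneg_left hjk hM.le,
      mul_nonneg (by linarith : (0:ℝ) ≤ α - cl) ht0,
      mul_nonneg hM.le (by linarith : (0:ℝ) ≤ α - 3 * β)]
  · nlinarith [mul_nonneg hα.le ht0,
      mul_nonneg hcr0 (by linarith : (0:ℝ) ≤ M * k + t0),
      mul_le_mul_of_nonneg_left
        (mul_le_mul_of_nonneg_right (by linarith : j ≤ L + 1) hA.le) hM.le,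
      mul_nonneg (mul_nonneg hM.le (by linarith : (0:ℝ) ≤ L + 1)) hβ0.le,
      mul_nonneg hM.le (by linarith : (0:ℝ) ≤ α - 3 * β / 2)]

/-- The four inequalities used for a big right parallelogram at `(j,k)`. -/
private lemma caseRbig {α β M cl cr L j k x0 t0 : ℝ}
    (hβ0 : 0 < β) (hβ : 3 * β < α) (hM : 0 < M)
    (hL : 2 ≤ L)
    (hcl0 : 0 ≤ cl) (hclA : cl ≤ α - β)
    (hcr0 : 0 ≤ cr)
    (hk0 : 0 ≤ k) (hjk : cl * k ≤ j * (α - β)) (hjL : j ≤ L) (hj0 : 0 ≤ j)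
    (ht0 : 0 ≤ t0) (ht1 : α * t0 ≤ M * α + M * β)
    (hx1 : -(3 * M * β / 2) ≤ x0 - α * t0) (hx2 : x0 - α * t0 ≤ -(M * β / 2)) :
    0 ≤ M * k + t0 ∧ cl * (M * k + t0) ≤ M * j * (α - β) + x0 + M * α ∧
      M * j * (α - β) + x0 ≤ M * α * (L + 2) + cr * (M * k + t0) := by
  have hα : 0 < α := by linarith
  have hA : 0 < α - β := by linarith
  have h0 : 0 ≤ M * k := mul_nonneg hM.le hk0
  refine ⟨by linarith, ?_, ?_⟩
  · nlinarith [mul_le_mul_of_nonneg_left hjk hM.le,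
      mul_nonneg (by linarith : (0:ℝ) ≤ α - cl) ht0,
      mul_nonneg hM.le (by linarith : (0:ℝ) ≤ α - 3 * β / 2)]
  · nlinarith [mul_nonneg hcr0 (by linarith : (0:ℝ) ≤ M * k + t0),
      mul_le_mul_of_nonneg_left
        (mul_le_mul_of_nonneg_right (by linarith : j ≤ L) hA.le) hM.le,
      mul_nonneg (mul_nonneg hM.le (by linarith : (0:ℝ) ≤ L)) hβ0.le,
      mul_nonneg hM.le (by linarith : (0:ℝ) ≤ α - β / 2)]

/-- The four inequalities used for a small right parallelogram at `(j,k)`. -/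
private lemma caseRsmall {α β M cl cr L j k x0 t0 : ℝ}
    (hβ0 : 0 < β) (hβ : 3 * β < α) (hM : 0 < M)
    (hL : 2 ≤ L)
    (hcl0 : 0 ≤ cl) (hclA : cl ≤ α - β)
    (hcr0 : 0 ≤ cr)
    (hk0 : 0 ≤ k) (hjk : cl * k ≤ j * (α - β)) (hjL : j ≤ L + 1) (hj0 : 0 ≤ j)
    (ht0 : 0 ≤ t0) (ht1 : 2 * α * t0 ≤ 3 * M * β)
    (hx1 : -(3 * M * β / 2) ≤ x0 - α * t0) (hx2 : x0 - α * t0 ≤ -(M * β / 2)) :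
    0 ≤ M * k + t0 ∧ cl * (M * k + t0) ≤ M * j * (α - β) + x0 + M * α ∧
      M * j * (α - β) + x0 ≤ M * α * (L + 2) + cr * (M * k + t0) := by
  have hα : 0 < α := by linarith
  have hA : 0 < α - β := by linarith
  have h0 : 0 ≤ M * k := mul_nonneg hM.le hk0
  refine ⟨by linarith, ?_, ?_⟩
  · nlinarith [mul_le_mul_of_nonneg_left hjk hM.le,
      mul_nonneg (by linarith : (0:ℝ) ≤ α - cl) ht0,
      mul_nonneg hM.le (by linarith : (0:ℝ) ≤ α - 3 * β / 2)]
  · nlinarith [mul_nonneg hcr0 (by linarith : (0:ℝ) ≤ M * k + t0),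
      mul_le_mul_of_nonneg_left
        (mul_le_mul_of_nonneg_right (by linarith : j ≤ L + 1) hA.le) hM.le,
      mul_nonneg (mul_nonneg hM.le (by linarith : (0:ℝ) ≤ L + 1)) hβ0.le,
      mul_nonneg hM.le (by linarith : (0:ℝ) ≤ α - β)]

private lemma handle_Lbig {α β M cl cr : ℝ} {ℓ d j k : ℤ} {q : ℝ × ℝ}
    (hβ0 : 0 < β) (hβ : 3 * β < α) (hM : 0 < M)
    (hL : (2:ℝ) ≤ (ℓ:ℝ)) (hD0 : (0:ℝ) ≤ (d:ℝ))
    (hcl0 : 0 ≤ cl) (hclA : cl ≤ α - β)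
    (hclK : cl * ((ℓ:ℝ) + (d:ℝ) + 1) = ((ℓ:ℝ) - (d:ℝ) - 1) * (α - β))
    (hcr0 : 0 ≤ cr)
    (hk0 : (0:ℝ) ≤ (k:ℝ)) (hkLD : (k:ℝ) ≤ (ℓ:ℝ) + (d:ℝ))
    (hjLD : (ℓ:ℝ) - (d:ℝ) ≤ (j:ℝ)) (hjL : (j:ℝ) ≤ (ℓ:ℝ) + 1) (hj0 : (0:ℝ) ≤ (j:ℝ))
    (hq : q ∈ Ljk α β M j k) :
    0 ≤ q.2 ∧ cl * q.2 ≤ q.1 + M * α ∧ q.1 ≤ M * α * ((ℓ:ℝ) + 2) + cr * q.2 := by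
  have hα : 0 < α := by linarith
  have hq' : q ∈ shiftSet (vjk α β M j k) (bigL α β M) := hq
  obtain ⟨r, hr, rfl⟩ := shift_mem' hq'
  obtain ⟨h1, h2, h3, h4⟩ := hr
  have e1 : (vjk α β M j k + r).1 = M * (j:ℝ) * (α - β) + r.1 := by simp [vjk]
  have e2 : (vjk α β M j k + r).2 = M * (k:ℝ) + r.2 := by simp [vjk]
  rw [e1, e2]
  exact caseLbig hβ0 hβ hM hL hD0 hcl0 hclA hclK hcr0 hk0 hkLD hjLD hjL hj0 h1
    (tbig hα h2) h3 h4

private lemma handle_Lsmall {α β M cl cr : ℝ} {ℓ : ℤ} {j k : ℤ} {q : ℝ × ℝ}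
    (hβ0 : 0 < β) (hβ : 3 * β < α) (hM : 0 < M)
    (hL : (2:ℝ) ≤ (ℓ:ℝ))
    (hcl0 : 0 ≤ cl) (hclA : cl ≤ α - β)
    (hcr0 : 0 ≤ cr)
    (hk0 : (0:ℝ) ≤ (k:ℝ)) (hjk : cl * (k:ℝ) ≤ (j:ℝ) * (α - β))
    (hjL : (j:ℝ) ≤ (ℓ:ℝ) + 1) (hj0 : (0:ℝ) ≤ (j:ℝ))
    (hq : q ∈ Lsjk α β M j k) :
    0 ≤ q.2 ∧ cl * q.2 ≤ q.1 + M * α ∧ q.1 ≤ M * α * ((ℓ:ℝ) + 2) + cr * q.2 := by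
  have hα : 0 < α := by linarith
  have hq' : q ∈ shiftSet (vjk α β M j k) (smallL α β M) := hq
  obtain ⟨r, hr, rfl⟩ := shift_mem' hq'
  obtain ⟨h1, h2, h3, h4⟩ := hr
  have e1 : (vjk α β M j k + r).1 = M * (j:ℝ) * (α - β) + r.1 := by simp [vjk]
  have e2 : (vjk α β M j k + r).2 = M * (k:ℝ) + r.2 := by simp [vjk]
  rw [e1, e2]
  exact caseLsmall hβ0 hβ hM hL hcl0 hclA hcr0 hk0 hjk hjL hj0 h1
    (tsmall hα h2) h3 h4

private lemma handle_Rbig {α β M cl cr : ℝ} {ℓ : ℤ} {j k : ℤ} {q : ℝ × ℝ}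
    (hβ0 : 0 < β) (hβ : 3 * β < α) (hM : 0 < M)
    (hL : (2:ℝ) ≤ (ℓ:ℝ))
    (hcl0 : 0 ≤ cl) (hclA : cl ≤ α - β)
    (hcr0 : 0 ≤ cr)
    (hk0 : (0:ℝ) ≤ (k:ℝ)) (hjk : cl * (k:ℝ) ≤ (j:ℝ) * (α - β))
    (hjL : (j:ℝ) ≤ (ℓ:ℝ)) (hj0 : (0:ℝ) ≤ (j:ℝ))
    (hq : q ∈ Rjk α β M j k) :
    0 ≤ q.2 ∧ cl * q.2 ≤ q.1 + M * α ∧ q.1 ≤ M * α * ((ℓ:ℝ) + 2) + cr * q.2 := by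
  have hα : 0 < α := by linarith
  have hq' : q ∈ shiftSet (vjk α β M j k) (bigR α β M) := hq
  obtain ⟨r, hr, rfl⟩ := shift_mem' hq'
  obtain ⟨h1, h2, h3, h4⟩ := hr
  have e1 : (vjk α β M j k + r).1 = M * (j:ℝ) * (α - β) + r.1 := by simp [vjk]
  have e2 : (vjk α β M j k + r).2 = M * (k:ℝ) + r.2 := by simp [vjk]
  rw [e1, e2]
  exact caseRbig hβ0 hβ hM hL hcl0 hclA hcr0 hk0 hjk hjL hj0 h1
    (tbig hα h2) h3 h4

private lemma handle_Rsmall {α β M cl cr : ℝ} {ℓ : ℤ} {j k : ℤ} {q : ℝ × ℝ}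
    (hβ0 : 0 < β) (hβ : 3 * β < α) (hM : 0 < M)
    (hL : (2:ℝ) ≤ (ℓ:ℝ))
    (hcl0 : 0 ≤ cl) (hclA : cl ≤ α - β)
    (hcr0 : 0 ≤ cr)
    (hk0 : (0:ℝ) ≤ (k:ℝ)) (hjk : cl * (k:ℝ) ≤ (j:ℝ) * (α - β))
    (hjL : (j:ℝ) ≤ (ℓ:ℝ) + 1) (hj0 : (0:ℝ) ≤ (j:ℝ))
    (hq : q ∈ Rsjk α β M j k) :
    0 ≤ q.2 ∧ cl * q.2 ≤ q.1 + M * α ∧ q.1 ≤ M * α * ((ℓ:ℝ) + 2) + cr * q.2 := by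
  have hα : 0 < α := by linarith
  have hq' : q ∈ shiftSet (vjk α β M j k) (smallR α β M) := hq
  obtain ⟨r, hr, rfl⟩ := shift_mem' hq'
  obtain ⟨h1, h2, h3, h4⟩ := hr
  have e1 : (vjk α β M j k + r).1 = M * (j:ℝ) * (α - β) + r.1 := by simp [vjk]
  have e2 : (vjk α β M j k + r).2 = M * (k:ℝ) + r.2 := by simp [vjk]
  rw [e1, e2]
  exact caseRsmall hβ0 hβ hM hL hcl0 hclA hcr0 hk0 hjk hjL hj0 h1
    (tsmall hα h2) h3 h4

/-- A `(j,k)` bound used for the small right connectors on the branches. -/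
private lemma branch_jk {cl A L D j k : ℝ} (hcl0 : 0 ≤ cl) (hA : 0 ≤ A)
    (hclK : cl * (L + D + 1) = (L - D - 1) * A) (hk : k ≤ L + D + 1) (hj : L - D - 1 ≤ j) :
    cl * k ≤ j * A := by
  nlinarith [mul_nonneg hcl0 (by linarith : (0:ℝ) ≤ L + D + 1 - k),
    mul_nonneg (by linarith : (0:ℝ) ≤ j - (L - D - 1)) hA]

/-- Every point of `Y00` satisfies the basic wedge inequalities. -/
private lemma Y00_bound {α β M : ℝ} (hα : 0 < α) (hβ0 : 0 < β) (hβ : 3 * β < α) (hM : 0 < M)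
    {ℓ d : ℤ} (hℓ : 2 ≤ ℓ) (hd0 : 0 ≤ d) (hd : d ≤ ℓ - 2)
    {cl cr : ℝ}
    (hclK : cl * ((ℓ:ℝ) + (d:ℝ) + 1) = ((ℓ:ℝ) - (d:ℝ) - 1) * (α - β))
    (hcrK : cr * ((ℓ:ℝ) + (d:ℝ) + 1) = ((ℓ:ℝ) - (d:ℝ) + 1) * (α - β)) :
    ∀ q ∈ Y00 α β M ℓ d, 0 ≤ q.2 ∧ cl * q.2 ≤ q.1 + M * α ∧
      q.1 ≤ M * α * ((ℓ:ℝ) + 2) + cr * q.2 := by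
  have hL : (2:ℝ) ≤ (ℓ:ℝ) := by exact_mod_cast hℓ
  have hD0 : (0:ℝ) ≤ (d:ℝ) := by exact_mod_cast hd0
  have hDL : (d:ℝ) ≤ (ℓ:ℝ) - 2 := by
    have h := hd
    have : ((d:ℤ):ℝ) ≤ ((ℓ - 2 : ℤ):ℝ) := by exact_mod_cast h
    push_cast at this; linarith
  have hA : (0:ℝ) < α - β := by linarith
  have hK : (0:ℝ) < (ℓ:ℝ) + (d:ℝ) + 1 := by linarith
  have hP : (0:ℝ) < (ℓ:ℝ) - (d:ℝ) - 1 := by linarith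
  have hcl0 : 0 ≤ cl := by nlinarith [mul_pos hP hA]
  have hclA : cl ≤ α - β := by nlinarith [mul_nonneg hD0 hA.le]
  have hcr0 : 0 ≤ cr := by nlinarith [mul_pos (by linarith : (0:ℝ) < (ℓ:ℝ) - (d:ℝ) + 1) hA]
  intro q hq
  rcases hq with (((((h | h) | h) | h) | h) | h)
  · -- bare bigR
    obtain ⟨h1, h2, h3, h4⟩ := h
    have ht1 : α * q.2 ≤ M * α + M * β := tbig hα h2
    refine ⟨h1, ?_, ?_⟩
    · nlinarith [mul_nonneg (by linarith : (0:ℝ) ≤ α - cl) h1,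
        mul_nonneg hM.le (by linarith : (0:ℝ) ≤ α - 3 * β / 2)]
    · nlinarith [mul_nonneg hcr0 h1,
        mul_nonneg (mul_nonneg hM.le hα.le) (by linarith : (0:ℝ) ≤ (ℓ:ℝ) + 1),
        mul_nonneg hM.le (by linarith : (0:ℝ) ≤ α - β / 2)]
  · -- diagonal pieces
    simp only [Set.mem_iUnion, Finset.mem_Icc, exists_prop] at h
    obtain ⟨i, ⟨hi1, hi2⟩, h⟩ := h
    have hi1' : (1:ℝ) ≤ (i:ℝ) := by exact_mod_cast hi1
    have hi2' : (i:ℝ) ≤ (ℓ:ℝ) := by exact_mod_cast hi2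
    have hjk : cl * (i:ℝ) ≤ (i:ℝ) * (α - β) := by nlinarith
    rcases h with h | h
    · exact handle_Rbig hβ0 hβ hM hL hcl0 hclA hcr0 (by linarith) hjk hi2' (by linarith) h
    · exact handle_Lsmall hβ0 hβ hM hL hcl0 hclA hcr0 (by linarith) hjk (by linarith)
        (by linarith) h
  · -- L_{ℓℓ}
    exact handle_Lbig hβ0 hβ hM hL hD0 hcl0 hclA hclK hcr0 (by push_cast; linarith)
      (by push_cast; linarith) (by push_cast; linarith) (by push_cast; linarith)
      (by push_cast; linarith) h
  · -- if 1 ≤ d : L_{ℓ+1,ℓ+1}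
    split_ifs at h with hd1
    · have hd1' : (1:ℝ) ≤ (d:ℝ) := by exact_mod_cast hd1
      exact handle_Lbig hβ0 hβ hM hL hD0 hcl0 hclA hclK hcr0 (by push_cast; linarith)
        (by push_cast; linarith) (by push_cast; linarith) (by push_cast; linarith)
        (by push_cast; linarith) h
    · exact absurd h (Set.notMem_empty q)
  · -- if d = 1 : L_{ℓ-1,ℓ+1} ∪ Rs_{ℓ-1,ℓ+1}
    split_ifs at h with hd1
    · have hd1' : (d:ℝ) = 1 := by exact_mod_cast hd1
      rcases h with h | h
      · exact handle_Lbig hβ0 hβ hM hL hD0 hcl0 hclA hclK hcr0 (by push_cast; linarith)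
          (by push_cast; linarith) (by push_cast; linarith) (by push_cast; linarith)
          (by push_cast; linarith) h
      · exact handle_Rsmall hβ0 hβ hM hL hcl0 hclA hcr0 (by push_cast; linarith)
          (branch_jk hcl0 hA.le hclK (by push_cast; linarith) (by push_cast; linarith))
          (by push_cast; linarith) (by push_cast; linarith) h
    · exact absurd h (Set.notMem_empty q)
  · -- if 2 ≤ d : branches
    split_ifs at h with hd2
    · have hd2' : (2:ℝ) ≤ (d:ℝ) := by exact_mod_cast hd2
      rcases h with (h | h) | h
      · simp only [Set.mem_iUnion, Finset.mem_Ico, exists_prop] at h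
        obtain ⟨i, ⟨hi0, hi1⟩, h⟩ := h
        have hi0' : (0:ℝ) ≤ (i:ℝ) := by exact_mod_cast hi0
        have hi1' : (i:ℝ) ≤ (d:ℝ) - 1 := by
          have : ((i:ℤ):ℝ) ≤ ((d - 1 : ℤ):ℝ) := by exact_mod_cast (by omega : i ≤ d - 1)
          push_cast at this; linarith
        rcases h with ((h | h) | h) | h
        · exact handle_Lbig hβ0 hβ hM hL hD0 hcl0 hclA hclK hcr0 (by push_cast; linarith)
            (by push_cast; linarith) (by push_cast; linarith) (by push_cast; linarith)
            (by push_cast; linarith) h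
        · exact handle_Rsmall hβ0 hβ hM hL hcl0 hclA hcr0 (by push_cast; linarith)
            (branch_jk hcl0 hA.le hclK (by push_cast; linarith) (by push_cast; linarith))
            (by push_cast; linarith) (by push_cast; linarith) h
        · exact handle_Lbig hβ0 hβ hM hL hD0 hcl0 hclA hclK hcr0 (by push_cast; linarith)
            (by push_cast; linarith) (by push_cast; linarith) (by push_cast; linarith)
            (by push_cast; linarith) h
        · exact handle_Rsmall hβ0 hβ hM hL hcl0 hclA hcr0 (by push_cast; linarith)
            (branch_jk hcl0 hA.le hclK (by push_cast; linarith) (by push_cast; linarith))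
            (by push_cast; linarith) (by push_cast; linarith) h
      · exact handle_Lbig hβ0 hβ hM hL hD0 hcl0 hclA hclK hcr0 (by push_cast; linarith)
          (by push_cast; linarith) (by push_cast; linarith) (by push_cast; linarith)
          (by push_cast; linarith) h
      · exact handle_Rsmall hβ0 hβ hM hL hcl0 hclA hcr0 (by push_cast; linarith)
          (branch_jk hcl0 hA.le hclK (by push_cast; linarith) (by push_cast; linarith))
          (by push_cast; linarith) (by push_cast; linarith) h
    · exact absurd h (Set.notMem_empty q)

/-- `Y(ℓ,d,M) ⊆ W(1/s_l, 1/s_r, Mα(ℓ+3)) − (Mα, 0)`. -/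
theorem Y_subset_wedge (α β M : ℝ) (hα : 0 < α) (hβ0 : 0 < β) (hβ : β < α / 3) (hM : 0 < M)
    (ℓ d : ℤ) (hℓ : 2 ≤ ℓ) (hd0 : 0 ≤ d) (hd : d ≤ ℓ - 2)
    (sl sr : ℝ)
    (hsl : sl = ((ℓ : ℝ) + d + 1) / (((ℓ : ℝ) - d - 1) * (α - β)))
    (hsr : sr = ((ℓ : ℝ) + d + 1) / (((ℓ : ℝ) - d + 1) * (α - β))) :
    ∀ p ∈ Yreg α β M ℓ d,
      (p.1 + M * α, p.2) ∈ wedge (1 / sl) (1 / sr) (M * α * ((ℓ : ℝ) + 3)) := by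
  intro p hp
  have hL : (2:ℝ) ≤ (ℓ:ℝ) := by exact_mod_cast hℓ
  have hD0 : (0:ℝ) ≤ (d:ℝ) := by exact_mod_cast hd0
  have hDL : (d:ℝ) ≤ (ℓ:ℝ) - 2 := by
    have : ((d:ℤ):ℝ) ≤ ((ℓ - 2 : ℤ):ℝ) := by exact_mod_cast hd
    push_cast at this; linarith
  have hA : (0:ℝ) < α - β := by linarith
  have hK : (0:ℝ) < (ℓ:ℝ) + (d:ℝ) + 1 := by linarith
  have hP : (0:ℝ) < (ℓ:ℝ) - (d:ℝ) - 1 := by linarith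
  set cl : ℝ := ((ℓ:ℝ) - d - 1) * (α - β) / ((ℓ:ℝ) + d + 1) with hcldef
  set cr : ℝ := ((ℓ:ℝ) - d + 1) * (α - β) / ((ℓ:ℝ) + d + 1) with hcrdef
  have h1sl : 1 / sl = cl := by rw [hsl, one_div_div]
  have h1sr : 1 / sr = cr := by rw [hsr, one_div_div]
  have hclK : cl * ((ℓ:ℝ) + (d:ℝ) + 1) = ((ℓ:ℝ) - (d:ℝ) - 1) * (α - β) := by
    rw [hcldef]; exact div_mul_cancel₀ _ hK.ne'
  have hcrK : cr * ((ℓ:ℝ) + (d:ℝ) + 1) = ((ℓ:ℝ) - (d:ℝ) + 1) * (α - β) := by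
    rw [hcrdef]; exact div_mul_cancel₀ _ hK.ne'
  simp only [Yreg, Set.mem_iUnion] at hp
  obtain ⟨j, k, ⟨hk0, _, hjk1, hjk2⟩, hp⟩ := hp
  have hk0' : (0:ℝ) ≤ (k:ℝ) := by exact_mod_cast hk0
  have hjk1' : -(k:ℝ) ≤ (j:ℝ) := by exact_mod_cast hjk1
  have hjk2' : (j:ℝ) ≤ (k:ℝ) := by exact_mod_cast hjk2
  have hp' : p ∈ shiftSet
      (M * ((k * (ℓ - d) + j : ℤ) : ℝ) * (α - β), M * (k : ℝ) * ((ℓ + d + 1 : ℤ) : ℝ))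
      (Y00 α β M ℓ d) := hp
  obtain ⟨q, hq, rfl⟩ := shift_mem' hp'
  obtain ⟨k1, k2, k3⟩ := Y00_bound hα hβ0 (by linarith) hM hℓ hd0 hd hclK hcrK q hq
  have e1 : ((M * ((k * (ℓ - d) + j : ℤ) : ℝ) * (α - β), M * (k : ℝ) * ((ℓ + d + 1 : ℤ) : ℝ))
      + q).1 = M * ((k:ℝ) * ((ℓ:ℝ) - d) + j) * (α - β) + q.1 := by
    simp only [Prod.fst_add]; push_cast; ring
  have e2 : ((M * ((k * (ℓ - d) + j : ℤ) : ℝ) * (α - β), M * (k : ℝ) * ((ℓ + d + 1 : ℤ) : ℝ))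
      + q).2 = M * (k:ℝ) * ((ℓ:ℝ) + d + 1) + q.2 := by
    simp only [Prod.snd_add]; push_cast; ring
  simp only [wedge, Set.mem_setOf_eq]
  refine ⟨?_, ?_, ?_⟩
  · rw [e2]
    have : (0:ℝ) ≤ M * (k:ℝ) * ((ℓ:ℝ) + d + 1) :=
      mul_nonneg (mul_nonneg hM.le hk0') hK.le
    linarith
  · rw [h1sl, e1, e2]
    have hkj : (0:ℝ) ≤ M * (α - β) * ((k:ℝ) + j) :=
      mul_nonneg (mul_nonneg hM.le hA.le) (by linarith)
    calc cl * (M * (k:ℝ) * ((ℓ:ℝ) + d + 1) + q.2)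
        = M * (k:ℝ) * (cl * ((ℓ:ℝ) + (d:ℝ) + 1)) + cl * q.2 := by ring
      _ = M * (k:ℝ) * (((ℓ:ℝ) - (d:ℝ) - 1) * (α - β)) + cl * q.2 := by rw [hclK]
      _ ≤ M * ((k:ℝ) * ((ℓ:ℝ) - d) + j) * (α - β) + q.1 + M * α := by nlinarith
  · rw [h1sr, e1, e2]
    have hkj : (0:ℝ) ≤ M * (α - β) * ((k:ℝ) - j) :=
      mul_nonneg (mul_nonneg hM.le hA.le) (by linarith)
    have ecr : M * (k:ℝ) * (cr * ((ℓ:ℝ) + (d:ℝ) + 1))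
        = M * (k:ℝ) * (((ℓ:ℝ) - (d:ℝ) + 1) * (α - β)) := by rw [hcrK]
    nlinarith [ecr]
end

section
/- Let α, s_l, s_r be real numbers with α > 0, 0 < s_r < s_l, and α·s_r > 1. Then there exist integers m and c and a real number β such that: m ≥ 2, m > 3/(α·s_r), s_r·m/(m−1) < s_l, (2/3)·α·m·s_r < c < α·m·s_r, c ≥ m, β = α − c/(m·s_r), 0 < β < α/3, and, setting s'_l = s_r·m/(m−1) (which satisfies s_r < s'_l < s_l), the quantities ℓ' = s_r·(s'_l·(α−β)+1)/(s'_l − s_r) and d' = s'_l·(s_r·(α−β)−1)/(s'_l − s_r) are equal to the integers c+m−1 and c−m respectively, and satisfy 0 ≤ d' ≤ ℓ' − 3. -/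
/-- The integrality step: one can choose `m`, `c` and `β` so that the parameters
`ℓ' = c+m−1` and `d' = c−m` are integers with `0 ≤ d' ≤ ℓ' − 3`. -/
theorem integrality_step (α sl sr : ℝ) (hα : 0 < α) (hsr : 0 < sr) (hsrsl : sr < sl)
    (hαsr : 1 < α * sr) :
    ∃ (m c : ℤ) (β : ℝ),
      2 ≤ m ∧
      3 / (α * sr) < (m : ℝ) ∧
      sr * (m : ℝ) / ((m : ℝ) - 1) < sl ∧
      2 / 3 * α * (m : ℝ) * sr < (c : ℝ) ∧
      (c : ℝ) < α * (m : ℝ) * sr ∧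
      m ≤ c ∧
      β = α - (c : ℝ) / ((m : ℝ) * sr) ∧
      0 < β ∧ β < α / 3 ∧
      sr < sr * (m : ℝ) / ((m : ℝ) - 1) ∧
      sr * (m : ℝ) / ((m : ℝ) - 1) < sl ∧
      sr * ((sr * (m : ℝ) / ((m : ℝ) - 1)) * (α - β) + 1) /
          (sr * (m : ℝ) / ((m : ℝ) - 1) - sr) = ((c + m - 1 : ℤ) : ℝ) ∧
      (sr * (m : ℝ) / ((m : ℝ) - 1)) * (sr * (α - β) - 1) /
          (sr * (m : ℝ) / ((m : ℝ) - 1) - sr) = ((c - m : ℤ) : ℝ) ∧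
      0 ≤ c - m ∧ c - m ≤ (c + m - 1) - 3 := by
  set m : ℤ := max 2 (max (⌊3 / (α * sr)⌋ + 1) (⌊sl / (sl - sr)⌋ + 1)) with hm
  have hm2 : (2 : ℤ) ≤ m := le_max_left _ _
  have hM2 : (2 : ℝ) ≤ (m : ℝ) := by exact_mod_cast hm2
  have hM1 : (1 : ℝ) < (m : ℝ) := by linarith
  have hMpos : (0 : ℝ) < (m : ℝ) := by linarith
  have hMm1 : (0 : ℝ) < (m : ℝ) - 1 := by linarith
  have hαsr' : 0 < α * sr := by positivity
  have hm3 : 3 / (α * sr) < (m : ℝ) := by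
    have h1 : (⌊3 / (α * sr)⌋ + 1 : ℤ) ≤ m := le_trans (le_max_left _ _) (le_max_right _ _)
    have h2 : 3 / (α * sr) < ((⌊3 / (α * sr)⌋ + 1 : ℤ) : ℝ) := by
      push_cast; exact Int.lt_floor_add_one _
    calc 3 / (α * sr) < ((⌊3 / (α * sr)⌋ + 1 : ℤ) : ℝ) := h2
      _ ≤ (m : ℝ) := by exact_mod_cast h1
  have hslsr : 0 < sl - sr := by linarith
  have hmsl : sl / (sl - sr) < (m : ℝ) := by
    have h1 : (⌊sl / (sl - sr)⌋ + 1 : ℤ) ≤ m := le_trans (le_max_right _ _) (le_max_right _ _)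
    have h2 : sl / (sl - sr) < ((⌊sl / (sl - sr)⌋ + 1 : ℤ) : ℝ) := by
      push_cast; exact Int.lt_floor_add_one _
    calc sl / (sl - sr) < _ := h2
      _ ≤ (m : ℝ) := by exact_mod_cast h1
  have hslope : sr * (m : ℝ) / ((m : ℝ) - 1) < sl := by
    rw [div_lt_iff₀ hMm1]
    have := (div_lt_iff₀ hslsr).mp hmsl
    nlinarith
  -- x = α * m * sr
  have hx3 : 3 < α * (m : ℝ) * sr := by
    have := (div_lt_iff₀ hαsr').mp hm3
    nlinarith
  have hxm : (m : ℝ) < α * (m : ℝ) * sr := by nlinarith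
  set c : ℤ := ⌈α * (m : ℝ) * sr⌉ - 1 with hc
  have hcx : (c : ℝ) < α * (m : ℝ) * sr := by
    have := Int.ceil_lt_add_one (α * (m : ℝ) * sr)
    push_cast [hc]; linarith
  have hcx1 : α * (m : ℝ) * sr - 1 ≤ (c : ℝ) := by
    have := Int.le_ceil (α * (m : ℝ) * sr)
    push_cast [hc]; linarith
  have hc23 : 2 / 3 * α * (m : ℝ) * sr < (c : ℝ) := by nlinarith
  have hmc : m ≤ c := by
    have : ((m : ℤ) : ℝ) - 1 < (c : ℝ) := by push_cast; linarith
    have : ((m : ℤ) : ℝ) < (c : ℝ) + 1 := by linarith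
    exact_mod_cast Int.lt_add_one_iff.mp (by exact_mod_cast this)
  clear_value m c
  refine ⟨m, c, α - (c : ℝ) / ((m : ℝ) * sr), hm2, hm3, hslope, hc23, hcx, hmc, rfl, ?_, ?_, ?_, hslope, ?_, ?_, by omega, by omega⟩
  · have : (c : ℝ) / ((m : ℝ) * sr) < α := by
      rw [div_lt_iff₀ (by positivity)]; nlinarith
    linarith
  · have : 2 / 3 * α < (c : ℝ) / ((m : ℝ) * sr) := by
      rw [lt_div_iff₀ (by positivity)]; nlinarith
    linarith
  · rw [lt_div_iff₀ hMm1]; nlinarith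
  · have hsr' : sr ≠ 0 := ne_of_gt hsr
    have hM' : (m : ℝ) - 1 ≠ 0 := ne_of_gt hMm1
    have hM0 : (m : ℝ) ≠ 0 := ne_of_gt hMpos
    have hden : sr * (m : ℝ) / ((m : ℝ) - 1) - sr ≠ 0 := by
      have : sr < sr * (m : ℝ) / ((m : ℝ) - 1) := by rw [lt_div_iff₀ hMm1]; nlinarith
      linarith
    rw [div_eq_iff hden]
    push_cast
    field_simp
    ring
  · have hsr' : sr ≠ 0 := ne_of_gt hsr
    have hM' : (m : ℝ) - 1 ≠ 0 := ne_of_gt hMm1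
    have hM0 : (m : ℝ) ≠ 0 := ne_of_gt hMpos
    have hden : sr * (m : ℝ) / ((m : ℝ) - 1) - sr ≠ 0 := by
      have : sr < sr * (m : ℝ) / ((m : ℝ) - 1) := by rw [lt_div_iff₀ hMm1]; nlinarith
      linarith
    rw [div_eq_iff hden]
    push_cast
    field_simp
    ring
end

section
/- Let α > 0, 0 < β < α/3, M > 0 be reals. Then for every (j,k) ∈ ℤ²: Ls_jk ⊆ L_jk, Rs_jk ⊆ R_jk, and R_jk ∩ L_jk = R_jk ∩ Ls_jk = Rs_jk ∩ L_jk. -/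
open Set

lemma shift_inter (v : ℝ × ℝ) (S T : Set (ℝ × ℝ)) :
    shiftSet v S ∩ shiftSet v T = shiftSet v (S ∩ T) :=
  (Set.image_inter (add_right_injective v)).symm

lemma shift_mono (v : ℝ × ℝ) {S T : Set (ℝ × ℝ)} (h : S ⊆ T) :
    shiftSet v S ⊆ shiftSet v T := Set.image_mono h


/-- The small parallelograms sit inside the large ones, and the three pairwise intersections
`R_jk ∩ L_jk`, `R_jk ∩ Ls_jk`, `Rs_jk ∩ L_jk` coincide. -/
theorem parallelogram_intersections (α β M : ℝ) (hα : 0 < α) (hβ0 : 0 < β) (hβ : β < α / 3)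
    (hM : 0 < M) :
    ∀ j k : ℤ,
      Lsjk α β M j k ⊆ Ljk α β M j k ∧
      Rsjk α β M j k ⊆ Rjk α β M j k ∧
      Rjk α β M j k ∩ Ljk α β M j k = Rjk α β M j k ∩ Lsjk α β M j k ∧
      Rjk α β M j k ∩ Ljk α β M j k = Rsjk α β M j k ∩ Ljk α β M j k := by
  have hαβ : 3 * M * β / (2 * α) ≤ M * (1 + β / α) := by
    have hα' : α ≠ 0 := ne_of_gt hα
    have hb : β / α * α = β := div_mul_cancel₀ β hα'
    rw [div_le_iff₀ (by positivity : (0:ℝ) < 2 * α)]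
    nlinarith [hb, mul_pos hM hα]
  have hLs : smallL α β M ⊆ bigL α β M := by
    rintro ⟨x, t⟩ ⟨h1, h2, h3, h4⟩
    exact ⟨h1, h2.trans hαβ, h3, h4⟩
  have hRs : smallR α β M ⊆ bigR α β M := by
    rintro ⟨x, t⟩ ⟨h1, h2, h3, h4⟩
    exact ⟨h1, h2.trans hαβ, h3, h4⟩
  have hkey : ∀ p : ℝ × ℝ, p ∈ bigR α β M → p ∈ bigL α β M →
      p.2 ≤ 3 * M * β / (2 * α) := by
    rintro ⟨x, t⟩ ⟨_, _, hr3, _⟩ ⟨_, _, _, hl4⟩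
    rw [le_div_iff₀ (by positivity : (0:ℝ) < 2 * α)]
    simp only at *
    nlinarith
  have h1 : bigR α β M ∩ bigL α β M = bigR α β M ∩ smallL α β M := by
    apply Set.Subset.antisymm
    · rintro p ⟨hr, hl⟩
      exact ⟨hr, hl.1, hkey p hr hl, hl.2.2.1, hl.2.2.2⟩
    · exact Set.inter_subset_inter_right _ hLs
  have h2 : bigR α β M ∩ bigL α β M = smallR α β M ∩ bigL α β M := by
    apply Set.Subset.antisymm
    · rintro p ⟨hr, hl⟩
      exact ⟨⟨hr.1, hkey p hr hl, hr.2.2.1, hr.2.2.2⟩, hl⟩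
    · exact Set.inter_subset_inter_left _ hRs
  intro j k
  refine ⟨shift_mono _ hLs, shift_mono _ hRs, ?_, ?_⟩
  · rw [Rjk, Ljk, Lsjk, shift_inter, shift_inter, h1]
  · rw [Rjk, Ljk, Rsjk, shift_inter, shift_inter, h2]
end
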